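/- Let G = (V,E) be a graph with n vertices, L a hierarchical customizable hub labeling of G respecting an order π, and α ≥ 2/3. Then there exists a set W of at least α·n vertices and an α-balanced separator S of G such that for every v ∈ W, S ⊆ L(v); in particular at least α·n vertices have |L(v)| ≥ b_α, the minimum size of an α-balanced separator. -/

import Mathlib

open SimpleGraph

namespace HCuHLAux

variable {V : Type*}

/-- Vertices reachable from `a` by walks in `G` avoiding `T`. -/
def compSet (G : SimpleGraph V) (T : Set V) (a : V) : Set V :=
  {u | ∃ p : G.Walk a u, ∀ x ∈ p.support, x ∉ T}

variable {G : SimpleGraph V} {T T' : Set V} {a b c : V}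

lemma mem_compSet_self (h : a ∉ T) : a ∈ compSet G T a :=
  ⟨SimpleGraph.Walk.nil, by simpa using h⟩

lemma not_mem_of_mem_compSet (h : b ∈ compSet G T a) : b ∉ T := by
  obtain ⟨p, hp⟩ := h
  exact hp b p.end_mem_support

lemma start_not_mem_of_mem_compSet (h : b ∈ compSet G T a) : a ∉ T := by
  obtain ⟨p, hp⟩ := h
  exact hp a p.start_mem_support

lemma compSet_symm (h : b ∈ compSet G T a) : a ∈ compSet G T b := by
  obtain ⟨p, hp⟩ := h
  refine ⟨p.reverse, fun x hx => hp x ?_⟩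
  simpa using hx

lemma compSet_trans (hab : b ∈ compSet G T a) (hbc : c ∈ compSet G T b) :
    c ∈ compSet G T a := by
  obtain ⟨p, hp⟩ := hab
  obtain ⟨q, hq⟩ := hbc
  refine ⟨p.append q, fun x hx => ?_⟩
  rw [SimpleGraph.Walk.mem_support_append_iff] at hx
  rcases hx with hx | hx
  · exact hp x hx
  · exact hq x hx

lemma compSet_eq (h : b ∈ compSet G T a) : compSet G T b = compSet G T a :=
  Set.ext fun _ => ⟨fun hx => compSet_trans h hx,
    fun hx => compSet_trans (compSet_symm h) hx⟩

lemma compSet_anti (hTT : T ⊆ T') : compSet G T' a ⊆ compSet G T a := by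
  rintro x ⟨p, hp⟩
  exact ⟨p, fun y hy hyT => hp y hy (hTT hyT)⟩

lemma compSet_support_subset [DecidableEq V] {p : G.Walk a b}
    (hp : ∀ x ∈ p.support, x ∉ T) : ∀ x ∈ p.support, x ∈ compSet G T a := by
  intro x hx
  exact ⟨p.takeUntil x hx, fun y hy =>
    hp y (SimpleGraph.Walk.support_takeUntil_subset _ _ hy)⟩

lemma compSet_disjoint (h : b ∉ compSet G T a) :
    Disjoint (compSet G T a) (compSet G T b) := by
  rw [Set.disjoint_left]
  intro x hxa hxb
  exact h (compSet_trans hxa (compSet_symm hxb))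

lemma reachable_induce_of_walk {s : Set V} :
    ∀ {a b : V} (p : G.Walk a b), (∀ x ∈ p.support, x ∈ s) →
      ∀ (ha : a ∈ s) (hb : b ∈ s), (G.induce s).Reachable ⟨a, ha⟩ ⟨b, hb⟩ := by
  intro a b p
  induction p with
  | nil => intro _ ha hb; exact SimpleGraph.Reachable.refl _
  | @cons a c b h q ih =>
    intro hs ha hb
    have hc : c ∈ s := hs c (by simp)
    refine SimpleGraph.Reachable.trans (SimpleGraph.Adj.reachable ?_) (ih ?_ hc hb)
    · exact h
    · intro x hx; exact hs x (by simp [hx])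

lemma supp_image_eq (S : Finset V) (v : ↥((↑S : Set V)ᶜ)) :
    Subtype.val '' ((G.induce ((↑S : Set V)ᶜ)).connectedComponentMk v).supp
      = compSet G (↑S) (v : V) := by
  ext x
  constructor
  · rintro ⟨y, hy, rfl⟩
    have hr : (G.induce ((↑S : Set V)ᶜ)).Reachable y v :=
      (SimpleGraph.ConnectedComponent.eq).mp hy
    obtain ⟨p⟩ := hr
    refine compSet_symm ⟨p.map (SimpleGraph.Embedding.induce _).toHom, ?_⟩
    intro z hz
    have hz : z ∈ p.support.map (SimpleGraph.Embedding.induce (G := G) _).toHom := by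
      rw [← SimpleGraph.Walk.support_map]; exact hz
    obtain ⟨u, _, rfl⟩ := List.mem_map.mp hz
    exact u.2
  · rintro ⟨p, hp⟩
    have hxS : x ∈ ((↑S : Set V)ᶜ) := hp x p.end_mem_support
    have hr := reachable_induce_of_walk p (fun z hz => hp z hz) v.2 hxS
    exact ⟨⟨x, hxS⟩, (SimpleGraph.ConnectedComponent.eq).mpr hr.symm, rfl⟩

lemma supp_ncard_eq (S : Finset V) (v : ↥((↑S : Set V)ᶜ)) :
    ((G.induce ((↑S : Set V)ᶜ)).connectedComponentMk v).supp.ncard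
      = (compSet G (↑S) (v : V)).ncard := by
  rw [← supp_image_eq, Set.ncard_image_of_injective _ Subtype.val_injective]

lemma small_of_disjoint [Fintype V] {s t : Set V} (hd : Disjoint s t) {α : ℝ}
    (hα : 1 / 2 ≤ α) (ht : α * Fintype.card V < (t.ncard : ℝ)) :
    (s.ncard : ℝ) ≤ α * Fintype.card V := by
  have h1 : s.ncard + t.ncard ≤ Fintype.card V := by
    rw [← Set.ncard_union_eq hd (Set.toFinite s) (Set.toFinite t)]
    have := Set.ncard_le_ncard (Set.subset_univ (s ∪ t)) (Set.toFinite _)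
    simpa [Set.ncard_univ, Nat.card_eq_fintype_card] using this
  have h2 : ((s.ncard : ℝ)) + (t.ncard : ℝ) ≤ (Fintype.card V : ℝ) := by
    exact_mod_cast h1
  have hN : (0 : ℝ) ≤ (Fintype.card V : ℝ) := Nat.cast_nonneg _
  nlinarith

variable {V : Type*}

lemma main_rec [Fintype V] [DecidableEq V] (G : SimpleGraph V) (π : V → ℕ)
    (hπ : Function.Injective π) (L : V → Set V)
    (hresp : ∀ v u : V, u ∈ L v → π v ≤ π u)
    (hcover : ∀ (s t : V) (p : G.Walk s t), p.IsPath →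
      ∃ x ∈ p.support, x ∈ L s ∩ L t)
    (α : ℝ) (hα : 2 / 3 ≤ α) :
    ∀ (k : ℕ) (A T : Finset V) (a₀ : V),
      A.card ≤ k →
      (↑A : Set V) = compSet G (↑T) a₀ →
      (∀ v ∈ A, ∀ w ∈ T, w ∈ L v) →
      α * Fintype.card V < A.card →
      ∃ S : Finset V, (↑T : Set V) ⊆ ↑S ∧ ∃ W : Finset V, W ⊆ A ∧
        α * Fintype.card V < W.card ∧
        (∀ v ∈ W, (↑S : Set V) ⊆ L v) ∧
        (∀ v ∈ A, v ∉ S → ((compSet G (↑S) v).ncard : ℝ) ≤ α * Fintype.card V) := by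
  have hα0 : (0 : ℝ) ≤ α := by linarith
  have hN : (0 : ℝ) ≤ (Fintype.card V : ℝ) := Nat.cast_nonneg _
  intro k
  induction k with
  | zero =>
    intro A T a₀ hk _ _ hbig
    exfalso
    have : (0 : ℝ) ≤ α * Fintype.card V := mul_nonneg hα0 hN
    have : (0 : ℝ) < A.card := lt_of_le_of_lt this hbig
    have : 0 < A.card := by exact_mod_cast this
    omega
  | succ k ih =>
    intro A T a₀ hk hA hlab hbig
    have hAne : A.Nonempty := by
      rw [← Finset.card_pos]
      have : (0 : ℝ) ≤ α * Fintype.card V := mul_nonneg hα0 hN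
      have : (0 : ℝ) < A.card := lt_of_le_of_lt this hbig
      exact_mod_cast this
    obtain ⟨w, hwA, hwmax⟩ := A.exists_max_image π hAne
    -- Claim: w is in every label of A
    have hwL : ∀ v ∈ A, w ∈ L v := by
      intro v hv
      have hvC : v ∈ compSet G (↑T) a₀ := by rw [← hA]; exact hv
      have hwC : w ∈ compSet G (↑T) a₀ := by rw [← hA]; exact hwA
      obtain ⟨p₁, hp₁⟩ := hvC
      obtain ⟨p₂, hp₂⟩ := hwC
      set p : G.Walk v w := p₁.reverse.append p₂ with hpdef
      have hsupp : ∀ x ∈ p.support, x ∈ A := by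
        intro x hx
        rw [hpdef, SimpleGraph.Walk.mem_support_append_iff] at hx
        have : x ∈ compSet G (↑T) a₀ := by
          rcases hx with hx | hx
          · exact compSet_support_subset hp₁ x (by simpa using hx)
          · exact compSet_support_subset hp₂ x hx
        rw [← hA] at this
        exact_mod_cast this
      obtain ⟨x, hxs, hx2⟩ := hcover v w p.bypass p.bypass_isPath
      have hxA : x ∈ A := hsupp x (SimpleGraph.Walk.support_bypass_subset _ hxs)
      have hxw : x = w := hπ (le_antisymm (hwmax x hxA) (hresp w x hx2.2))
      rw [← hxw]
      exact hx2.1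
    by_cases hbigex : ∃ v₀ ∈ A,
        α * Fintype.card V < ((compSet G (↑(insert w T)) v₀).ncard : ℝ)
    · -- recursive case
      obtain ⟨v₀, hv₀A, hbig'⟩ := hbigex
      set T2 : Finset V := insert w T with hT2
      have hv₀T2 : v₀ ∉ (↑T2 : Set V) := by
        have hne : (compSet G (↑T2) v₀).Nonempty := by
          rw [Set.nonempty_iff_ne_empty]
          intro h
          rw [h] at hbig'
          simp only [Set.ncard_empty, Nat.cast_zero] at hbig'
          exact absurd hbig' (not_lt.mpr (mul_nonneg hα0 hN))
        obtain ⟨b, hb⟩ := hne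
        exact start_not_mem_of_mem_compSet hb
      set A' : Finset V := (Set.toFinite (compSet G (↑T2) v₀)).toFinset with hA'def
      have hA' : (↑A' : Set V) = compSet G (↑T2) v₀ := Set.Finite.coe_toFinset _
      have hTT2 : (↑T : Set V) ⊆ ↑T2 := by
        intro x hx; simp only [hT2, Finset.coe_insert, Set.mem_insert_iff]; right; exact hx
      have hsubA : A' ⊆ A := by
        intro x hx
        have hx' : x ∈ compSet G (↑T2) v₀ := by rw [← hA']; exact_mod_cast hx
        have hx2 : x ∈ compSet G (↑T) v₀ := compSet_anti hTT2 hx'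
        have hv₀C : v₀ ∈ compSet G (↑T) a₀ := by rw [← hA]; exact hv₀A
        have : x ∈ compSet G (↑T) a₀ := compSet_trans hv₀C hx2
        rw [← hA] at this
        exact_mod_cast this
      have hwA' : w ∉ A' := by
        intro hw
        have : w ∈ compSet G (↑T2) v₀ := by rw [← hA']; exact_mod_cast hw
        exact not_mem_of_mem_compSet this (by simp [hT2])
      have hcard : A'.card ≤ k := by
        have : A'.card < A.card :=
          Finset.card_lt_card ⟨hsubA, fun h => hwA' (h hwA)⟩
        omega
      have hlab' : ∀ v ∈ A', ∀ s ∈ T2, s ∈ L v := by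
        intro v hv s hs
        rcases Finset.mem_insert.mp hs with rfl | hs
        · exact hwL v (hsubA hv)
        · exact hlab v (hsubA hv) s hs
      have hbig'' : α * Fintype.card V < A'.card := by
        have : A'.card = (compSet G (↑T2) v₀).ncard :=
          (Set.ncard_eq_toFinset_card _ (Set.toFinite _)).symm
        rw [this]; exact hbig'
      obtain ⟨S, hTS, W, hWA', hWcard, hWlab, hbal'⟩ := ih A' T2 v₀ hcard hA' hlab' hbig''
      refine ⟨S, fun x hx => hTS (hTT2 hx), W, fun x hx => hsubA (hWA' hx),
        hWcard, hWlab, ?_⟩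
      intro v hvA hvS
      by_cases hvA' : v ∈ A'
      · exact hbal' v hvA' hvS
      · have hvnot : v ∉ compSet G (↑T2) v₀ := by rw [← hA']; exact_mod_cast hvA'
        have hd : Disjoint (compSet G (↑T2) v) (compSet G (↑T2) v₀) :=
          (compSet_disjoint hvnot).symm
        have hsmall : ((compSet G (↑T2) v).ncard : ℝ) ≤ α * Fintype.card V :=
          small_of_disjoint hd (by linarith) hbig'
        have hsub : compSet G (↑S) v ⊆ compSet G (↑T2) v := compSet_anti hTS
        have := Set.ncard_le_ncard hsub (Set.toFinite _)
        calc ((compSet G (↑S) v).ncard : ℝ) ≤ ((compSet G (↑T2) v).ncard : ℝ) := by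
              exact_mod_cast this
          _ ≤ α * Fintype.card V := hsmall
    · -- base case
      push_neg at hbigex
      refine ⟨insert w T, ?_, A, le_refl A, hbig, ?_, ?_⟩
      · intro x hx
        simp only [Finset.coe_insert, Set.mem_insert_iff]; right; exact hx
      · intro v hv s hs
        rcases Finset.mem_insert.mp (by exact_mod_cast hs) with rfl | hs'
        · exact hwL v hv
        · exact hlab v hv s hs'
      · intro v hvA hvS
        exact hbigex v hvA

end HCuHLAux

/-- `S` is an `α`-balanced separator of `G`: every connected component of
`G[V ∖ S]` has at most `α·n` vertices. -/
def IsBalancedSeparator {V : Type*} [Fintype V] (G : SimpleGraph V) (α : ℝ)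
    (S : Finset V) : Prop :=
  ∀ C : (G.induce ((↑S : Set V)ᶜ)).ConnectedComponent,
    (C.supp.ncard : ℝ) ≤ α * Fintype.card V

/-- `b_α`: the minimum size of an `α`-balanced separator of `G`. -/
noncomputable def minBalSepSize {V : Type*} [Fintype V] (G : SimpleGraph V)
    (α : ℝ) : ℕ :=
  sInf {m : ℕ | ∃ S : Finset V, IsBalancedSeparator G α S ∧ S.card = m}

/-- For any hierarchical customizable hub labeling `L` of `G` and any
`α ∈ [2/3, 1)`, there is a set `W` of at least `α·n` vertices and an `α`-balanced
separator `S` with `S ⊆ L(v)` for all `v ∈ W`; in particular all `v ∈ W` satisfy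
`|L(v)| ≥ b_α`. -/
theorem HCuHL_label_lower_bound {V : Type*} [Fintype V] [DecidableEq V]
    (G : SimpleGraph V) (π : V → ℕ) (hπ : Function.Injective π)
    (L : V → Set V)
    (hresp : ∀ v u : V, u ∈ L v → π v ≤ π u)
    (hcover : ∀ (s t : V) (p : G.Walk s t), p.IsPath →
      ∃ x ∈ p.support, x ∈ L s ∩ L t)
    (α : ℝ) (hα : 2 / 3 ≤ α) (hα1 : α < 1) :
    ∃ (W S : Finset V),
      α * Fintype.card V ≤ W.card ∧
      IsBalancedSeparator G α S ∧
      (∀ v ∈ W, (↑S : Set V) ⊆ L v) ∧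
      (∀ v ∈ W, minBalSepSize G α ≤ (L v).ncard) := by
  classical
  have hα0 : (0 : ℝ) ≤ α := by linarith
  have hN : (0 : ℝ) ≤ (Fintype.card V : ℝ) := Nat.cast_nonneg _
  by_cases hsmall : ∀ v : V,
      ((HCuHLAux.compSet G (↑(∅ : Finset V)) v).ncard : ℝ) ≤ α * Fintype.card V
  · -- the empty set is already a balanced separator
    have hbalsep : IsBalancedSeparator G α (∅ : Finset V) := by
      intro C
      obtain ⟨v, rfl⟩ := C.exists_rep
      show (((G.induce ((↑(∅ : Finset V) : Set V)ᶜ)).connectedComponentMk v).supp.ncard : ℝ) ≤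
        α * Fintype.card V
      rw [HCuHLAux.supp_ncard_eq]
      exact hsmall _
    refine ⟨Finset.univ, ∅, ?_, hbalsep, ?_, ?_⟩
    · rw [Finset.card_univ]
      calc α * Fintype.card V ≤ 1 * Fintype.card V :=
            mul_le_mul_of_nonneg_right (le_of_lt hα1) hN
        _ = (Fintype.card V : ℝ) := one_mul _
    · intro v _; simp
    · intro v _
      have h0 : minBalSepSize G α ≤ (∅ : Finset V).card :=
        Nat.sInf_le ⟨∅, hbalsep, rfl⟩
      simp only [Finset.card_empty, Nat.le_zero] at h0
      omega
  · push_neg at hsmall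
    obtain ⟨v₀, hv₀⟩ := hsmall
    set A : Finset V :=
      (Set.toFinite (HCuHLAux.compSet G (↑(∅ : Finset V)) v₀)).toFinset with hAdef
    have hA : (↑A : Set V) = HCuHLAux.compSet G (↑(∅ : Finset V)) v₀ :=
      Set.Finite.coe_toFinset _
    have hAcard : (A.card : ℝ) = ((HCuHLAux.compSet G (↑(∅ : Finset V)) v₀).ncard : ℝ) := by
      rw [Set.ncard_eq_toFinset_card _ (Set.toFinite _)]
    have hbig : α * Fintype.card V < A.card := by rw [hAcard]; exact hv₀
    obtain ⟨S, hTS, W, hWA, hWcard, hWlab, hbal⟩ :=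
      HCuHLAux.main_rec G π hπ L hresp hcover α hα A.card A ∅ v₀ le_rfl hA
        (by intro v _ w hw; exact absurd hw (Finset.notMem_empty w)) hbig
    have hbalsep : IsBalancedSeparator G α S := by
      intro C
      obtain ⟨v, rfl⟩ := C.exists_rep
      show (((G.induce ((↑S : Set V)ᶜ)).connectedComponentMk v).supp.ncard : ℝ) ≤
        α * Fintype.card V
      rw [HCuHLAux.supp_ncard_eq]
      have hvS : (v : V) ∉ S := v.2
      by_cases hvA : (v : V) ∈ A
      · exact hbal v hvA hvS
      · have hvnot : (v : V) ∉ HCuHLAux.compSet G (↑(∅ : Finset V)) v₀ := by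
          rw [← hA]; exact_mod_cast hvA
        have hd : Disjoint (HCuHLAux.compSet G (↑(∅ : Finset V)) (v : V))
            (HCuHLAux.compSet G (↑(∅ : Finset V)) v₀) :=
          (HCuHLAux.compSet_disjoint hvnot).symm
        have hsm : ((HCuHLAux.compSet G (↑(∅ : Finset V)) (v : V)).ncard : ℝ) ≤
            α * Fintype.card V :=
          HCuHLAux.small_of_disjoint hd (by linarith) hv₀
        have hsub : HCuHLAux.compSet G (↑S) (v : V) ⊆
            HCuHLAux.compSet G (↑(∅ : Finset V)) (v : V) :=
          HCuHLAux.compSet_anti (by simp)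
        have := Set.ncard_le_ncard hsub (Set.toFinite _)
        calc ((HCuHLAux.compSet G (↑S) (v : V)).ncard : ℝ)
            ≤ ((HCuHLAux.compSet G (↑(∅ : Finset V)) (v : V)).ncard : ℝ) := by
              exact_mod_cast this
          _ ≤ α * Fintype.card V := hsm
    refine ⟨W, S, le_of_lt hWcard, hbalsep, hWlab, ?_⟩
    intro v hv
    have h1 : minBalSepSize G α ≤ S.card := Nat.sInf_le ⟨S, hbalsep, rfl⟩
    have h2 : S.card = (↑S : Set V).ncard := (Set.ncard_coe_finset S).symm
    have h3 : (↑S : Set V).ncard ≤ (L v).ncard :=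
      Set.ncard_le_ncard (hWlab v hv) (Set.toFinite _)
    omega
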